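/- arXiv:1603.06564 — 3 statements merged into one kernel-verified Lean document; each statement's English description precedes it below -/
import Mathlib

section
/- Le Cam's inequality: Let ξ₁, …, ξ_a be independent Bernoulli random variables with parameters q₁, …, q_a, let S = ξ₁ + ⋯ + ξ_a and λ = q₁ + ⋯ + q_a. Then ∑_{j=1}^∞ |P(S = j) − λ^j e^{−λ}/j!| ≤ 2 ∑_{i=1}^a q_i². -/
open MeasureTheory ProbabilityTheory

namespace LeCamAux

noncomputable def pois (l : ℝ) (n : ℕ) : ℝ := l ^ n * Real.exp (-l) / n.factorial

noncomputable def bern (p : ℝ) (n : ℕ) : ℝ := if n = 0 then 1 - p else if n = 1 then p else 0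

noncomputable def conv (f g : ℕ → ℝ) (n : ℕ) : ℝ := ∑ k ∈ Finset.range (n+1), f k * g (n - k)

lemma hasSum_pois (l : ℝ) : HasSum (pois l) 1 := by
  have h := NormedSpace.expSeries_div_hasSum_exp (𝔸 := ℝ) l
  rw [← Real.exp_eq_exp_ℝ] at h
  have h2 := h.mul_right (Real.exp (-l))
  rw [← Real.exp_add, add_neg_cancel, Real.exp_zero] at h2
  have : pois l = fun n => l ^ n / n.factorial * Real.exp (-l) := by
    funext n; unfold pois; ring
  rw [this]; exact h2

lemma pois_nonneg {l : ℝ} (hl : 0 ≤ l) (n : ℕ) : 0 ≤ pois l n := by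
  unfold pois; positivity

lemma hasSum_bern (p : ℝ) : HasSum (bern p) 1 := by
  have h0 : HasSum (fun n : ℕ => if n = 0 then 1 - p else 0) (1 - p) := hasSum_ite_eq 0 (1 - p)
  have h1 : HasSum (fun n : ℕ => if n = 1 then p else 0) p := hasSum_ite_eq 1 p
  have h := h0.add h1
  rw [sub_add_cancel] at h
  have : bern p = fun n : ℕ =>
      (if n = 0 then 1 - p else 0) + (if n = 1 then p else 0) := by
    funext n; unfold bern; rcases n with _ | _ | n <;> simp
  rw [this]; exact h

lemma bern_nonneg {p : ℝ} (h0 : 0 ≤ p) (h1 : p ≤ 1) (n : ℕ) : 0 ≤ bern p n := by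
  unfold bern; rcases n with _ | _ | n <;> simp <;> linarith

lemma hasSum_conv {f g : ℕ → ℝ} (hf : Summable fun n => |f n|) (hg : Summable fun n => |g n|) :
    HasSum (conv f g) ((∑' n, f n) * (∑' n, g n)) :=
  hasSum_sum_range_mul_of_summable_norm (f := f) (g := g)
    (by simpa [Real.norm_eq_abs] using hf) (by simpa [Real.norm_eq_abs] using hg)

lemma conv_comm (f g : ℕ → ℝ) (n : ℕ) : conv f g n = conv g f n := by
  unfold conv
  rw [← Finset.sum_range_reflect]
  apply Finset.sum_congr rfl
  intro k hk
  rw [Finset.mem_range, Nat.lt_succ_iff] at hk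
  have h1 : n + 1 - 1 - k = n - k := by omega
  rw [h1, Nat.sub_sub_self hk, mul_comm]

lemma conv_pois_pois (l1 l2 : ℝ) : conv (pois l1) (pois l2) = pois (l1 + l2) := by
  funext n
  unfold conv pois
  rw [neg_add, Real.exp_add, add_pow, Finset.sum_mul, Finset.sum_div]
  apply Finset.sum_congr rfl
  intro k hk
  rw [Finset.mem_range, Nat.lt_succ_iff] at hk
  rw [Nat.cast_choose ℝ hk]
  have h1 : (k.factorial : ℝ) ≠ 0 := Nat.cast_ne_zero.mpr k.factorial_ne_zero
  have h2 : ((n - k).factorial : ℝ) ≠ 0 := Nat.cast_ne_zero.mpr (n - k).factorial_ne_zero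
  have h3 : (n.factorial : ℝ) ≠ 0 := Nat.cast_ne_zero.mpr n.factorial_ne_zero
  field_simp

/-- one-sided contraction -/
lemma contraction {f g h : ℕ → ℝ}
    (hf : Summable fun n => |f n|) (hg : Summable fun n => |g n|)
    (hh0 : ∀ n, 0 ≤ h n) (hh1 : HasSum h 1) :
    Summable (fun n => |conv f h n - conv g h n|) ∧
      ∑' n, |conv f h n - conv g h n| ≤ ∑' n, |f n - g n| := by
  have hfg : Summable fun n => |f n - g n| :=
    (hf.add hg).of_nonneg_of_le (fun n => abs_nonneg _) (fun n => abs_sub _ _)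
  have hhabs : Summable fun n => |h n| := by
    refine hh1.summable.congr fun n => ?_
    rw [abs_of_nonneg (hh0 n)]
  have hconv : HasSum (conv (fun k => |f k - g k|) h) (∑' n, |f n - g n|) := by
    have := hasSum_conv (f := fun k => |f k - g k|) (g := h) (by simpa using hfg) hhabs
    rwa [hh1.tsum_eq, mul_one] at this
  have hle : ∀ n, |conv f h n - conv g h n| ≤ conv (fun k => |f k - g k|) h n := by
    intro n
    have hEq : conv f h n - conv g h n = ∑ k ∈ Finset.range (n+1), (f k - g k) * h (n - k) := by
      unfold conv; rw [← Finset.sum_sub_distrib]; exact Finset.sum_congr rfl fun k _ => by ring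
    rw [hEq]
    refine (Finset.abs_sum_le_sum_abs _ _).trans ?_
    unfold conv
    apply Finset.sum_le_sum
    intro k _
    rw [abs_mul, abs_of_nonneg (hh0 _)]
  have hsummLHS : Summable (fun n => |conv f h n - conv g h n|) :=
    hconv.summable.of_nonneg_of_le (fun n => abs_nonneg _) hle
  exact ⟨hsummLHS, by
    calc ∑' n, |conv f h n - conv g h n| ≤ ∑' n, conv (fun k => |f k - g k|) h n :=
          Summable.tsum_le_tsum hle hsummLHS hconv.summable
      _ = ∑' n, |f n - g n| := hconv.tsum_eq⟩

/-- two-sided bound -/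
lemma dist_conv_conv {f g h k : ℕ → ℝ}
    (hf : Summable fun n => |f n|) (hg0 : ∀ n, 0 ≤ g n) (hg1 : HasSum g 1)
    (hh0 : ∀ n, 0 ≤ h n) (hh1 : HasSum h 1) (hk : Summable fun n => |k n|) :
    Summable (fun n => |conv f h n - conv g k n|) ∧
      ∑' n, |conv f h n - conv g k n| ≤ (∑' n, |f n - g n|) + ∑' n, |h n - k n| := by
  have hgabs : Summable fun n => |g n| := by
    refine hg1.summable.congr fun n => ?_; rw [abs_of_nonneg (hg0 n)]
  obtain ⟨hs1, hb1⟩ := contraction hf hgabs hh0 hh1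
  have hhabs : Summable fun n => |h n| := by
    refine hh1.summable.congr fun n => ?_; rw [abs_of_nonneg (hh0 n)]
  obtain ⟨hs2, hb2⟩ := contraction hhabs hk hg0 hg1
  have hcc : ∀ n, |conv g h n - conv g k n| = |conv h g n - conv k g n| := fun n => by
    rw [conv_comm g h, conv_comm g k]
  have hs2' : Summable fun n => |conv g h n - conv g k n| := hs2.congr fun n => (hcc n).symm
  have htri : ∀ n, |conv f h n - conv g k n| ≤
      |conv f h n - conv g h n| + |conv g h n - conv g k n| :=
    fun n => abs_sub_le _ _ _
  have hsum : Summable (fun n => |conv f h n - conv g k n|) :=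
    (hs1.add hs2').of_nonneg_of_le (fun n => abs_nonneg _) htri
  refine ⟨hsum, ?_⟩
  calc ∑' n, |conv f h n - conv g k n|
      ≤ ∑' n, (|conv f h n - conv g h n| + |conv g h n - conv g k n|) :=
        Summable.tsum_le_tsum htri hsum (hs1.add hs2')
    _ = (∑' n, |conv f h n - conv g h n|) + ∑' n, |conv g h n - conv g k n| := Summable.tsum_add hs1 hs2'
    _ ≤ _ := by
        refine add_le_add hb1 ?_
        calc ∑' n, |conv g h n - conv g k n| = ∑' n, |conv h g n - conv k g n| := tsum_congr hcc
          _ ≤ _ := hb2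

lemma bern_pois_dist {p : ℝ} (hp0 : 0 ≤ p) (hp1 : p ≤ 1) :
    ∑' n, |bern p n - pois p n| ≤ 2 * p ^ 2 := by
  set E := Real.exp (-p) with hE
  have he1 : 1 - p ≤ E := by have := Real.add_one_le_exp (-p); linarith
  have he2 : E ≤ 1 := Real.exp_le_one_iff.mpr (by linarith)
  have hsB : Summable fun n => |bern p n| := (hasSum_bern p).summable.abs
  have hsP : Summable fun n => |pois p n| := (hasSum_pois p).summable.abs
  have hF : Summable fun n => |bern p n - pois p n| :=
    (hsB.add hsP).of_nonneg_of_le (fun n => abs_nonneg _) (fun n => abs_sub _ _)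
  have hp0' : pois p 0 = E := by simp [pois, hE]
  have hp1' : pois p 1 = p * E := by simp [pois, hE]
  have hb0 : bern p 0 = 1 - p := by simp [bern]
  have hb1 : bern p 1 = p := by simp [bern]
  have hps : Summable (pois p) := (hasSum_pois p).summable
  have h1 : pois p 0 + (pois p 1 + ∑' n, pois p (n + 1 + 1)) = 1 := by
    have := (hasSum_pois p).tsum_eq
    rwa [Summable.tsum_eq_zero_add hps, Summable.tsum_eq_zero_add ((summable_nat_add_iff 1).mpr hps)] at this
  have htail : ∑' n, |bern p n - pois p n| =
      |bern p 0 - pois p 0| + (|bern p 1 - pois p 1| + ∑' n, pois p (n + 1 + 1)) := by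
    rw [Summable.tsum_eq_zero_add hF, Summable.tsum_eq_zero_add ((summable_nat_add_iff 1).mpr hF)]
    congr 2
    apply tsum_congr
    intro n
    have hbz : bern p (n + 1 + 1) = 0 := by simp [bern]
    rw [hbz, zero_sub, abs_neg, abs_of_nonneg (pois_nonneg hp0 _)]
  rw [htail, hb0, hb1, hp0', hp1']
  rw [hp0', hp1'] at h1
  rw [abs_of_nonpos (by linarith), abs_of_nonneg (by nlinarith)]
  nlinarith

variable {Ω : Type*} [MeasureSpace Ω] [IsProbabilityMeasure (ℙ : Measure Ω)]

lemma hasSum_law {X : Ω → ℕ} (hX : Measurable X) :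
    HasSum (fun n => (ℙ {ω | X ω = n}).toReal) 1 := by
  have hmeasset : ∀ n : ℕ, MeasurableSet {ω | X ω = n} := fun n => hX (measurableSet_singleton n)
  have hdisj : Pairwise (Function.onFun Disjoint fun n : ℕ => {ω | X ω = n}) := by
    intro m n hmn
    refine Set.disjoint_left.mpr fun ω h1 h2 => hmn ?_
    simp only [Set.mem_setOf_eq] at h1 h2; omega
  have h : ∑' n, ℙ {ω | X ω = n} = 1 := by
    rw [← measure_iUnion hdisj hmeasset]
    have hu : (⋃ n, {ω | X ω = n}) = Set.univ := by ext ω; simp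
    rw [hu, measure_univ]
  have hne : ∀ n, ℙ {ω | X ω = n} ≠ ⊤ := fun n => measure_ne_top _ _
  have hsumm : Summable fun n => (ℙ {ω | X ω = n}).toReal := by
    apply ENNReal.summable_toReal
    rw [h]; exact ENNReal.one_ne_top
  refine hsumm.hasSum_iff.mpr ?_
  rw [← ENNReal.tsum_toReal_eq hne, h, ENNReal.toReal_one]

lemma law_add {X Y : Ω → ℕ} (hX : Measurable X) (hY : Measurable Y)
    (hind : IndepFun X Y ℙ) (n : ℕ) :
    (ℙ {ω | X ω + Y ω = n}).toReal =
      conv (fun k => (ℙ {ω | X ω = k}).toReal) (fun k => (ℙ {ω | Y ω = k}).toReal) n := by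
  have hset : {ω | X ω + Y ω = n} =
      ⋃ k ∈ Finset.range (n + 1), ({ω | X ω = k} ∩ {ω | Y ω = n - k}) := by
    ext ω
    simp only [Set.mem_setOf_eq, Set.mem_iUnion, Finset.mem_range, Set.mem_inter_iff]
    constructor
    · intro h; exact ⟨X ω, by omega, rfl, by omega⟩
    · rintro ⟨k, hk, h1, h2⟩; omega
  have hmeas : ∀ k ∈ Finset.range (n+1), MeasurableSet ({ω | X ω = k} ∩ {ω | Y ω = n - k}) :=
    fun k _ => (hX (measurableSet_singleton k)).inter (hY (measurableSet_singleton (n - k)))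
  have hdisj : Set.PairwiseDisjoint (↑(Finset.range (n+1)))
      (fun k => {ω | X ω = k} ∩ {ω | Y ω = n - k}) := by
    intro i _ j _ hij
    refine Set.disjoint_left.mpr fun ω h1 h2 => hij ?_
    obtain ⟨h1a, -⟩ := h1; obtain ⟨h2a, -⟩ := h2
    simp only [Set.mem_setOf_eq] at h1a h2a; omega
  rw [hset, measure_biUnion_finset hdisj hmeas, ENNReal.toReal_sum (fun k _ => measure_ne_top _ _)]
  apply Finset.sum_congr rfl
  intro k _
  have := hind.measure_inter_preimage_eq_mul {k} {n - k}
    (measurableSet_singleton k) (measurableSet_singleton (n - k))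
  have hpre : (X ⁻¹' {k} ∩ Y ⁻¹' {n - k}) = ({ω | X ω = k} ∩ {ω | Y ω = n - k}) := rfl
  rw [hpre] at this
  rw [this, ENNReal.toReal_mul]
  rfl

lemma law_bern {X : Ω → ℕ} (hX : Measurable X) {p : ℝ}
    (h1 : (ℙ {ω | X ω = 1}).toReal = p) (h0 : (ℙ {ω | X ω = 0}).toReal = 1 - p) (n : ℕ) :
    (ℙ {ω | X ω = n}).toReal = bern p n := by
  have hs := hasSum_law hX
  match n with
  | 0 => simpa [bern] using h0
  | 1 => simpa [bern] using h1
  | (m+2) =>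
    have hnn : ∀ k, 0 ≤ (ℙ {ω | X ω = k}).toReal := fun k => ENNReal.toReal_nonneg
    have hle : ∑ k ∈ ({0, 1, m+2} : Finset ℕ), (ℙ {ω | X ω = k}).toReal ≤ 1 :=
      sum_le_hasSum _ (fun k _ => hnn k) hs
    rw [Finset.sum_insert (by simp), Finset.sum_insert (by simp), Finset.sum_singleton] at hle
    rw [h0, h1] at hle
    have hz : (ℙ {ω | X ω = m + 2}).toReal = 0 := le_antisymm (by linarith) (hnn _)
    rw [hz]
    simp [bern]

end LeCamAux

open LeCamAux in
theorem le_cam_inequality {Ω : Type*} [MeasureSpace Ω]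
    [IsProbabilityMeasure (ℙ : Measure Ω)]
    (a : ℕ) (ξ : Fin a → Ω → ℕ) (q : Fin a → ℝ)
    (hq : ∀ i, q i ∈ Set.Icc (0 : ℝ) 1)
    (hmeas : ∀ i, Measurable (ξ i))
    (hind : iIndepFun ξ ℙ)
    (hBern1 : ∀ i, (ℙ {ω | ξ i ω = 1}).toReal = q i)
    (hBern0 : ∀ i, (ℙ {ω | ξ i ω = 0}).toReal = 1 - q i) :
    ∑' j : ℕ,
        |(ℙ {ω | (∑ i, ξ i ω) = j + 1}).toReal -
          (∑ i, q i) ^ (j + 1) * Real.exp (-(∑ i, q i)) / (j + 1).factorial|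
      ≤ 2 * ∑ i, (q i) ^ 2 := by
  classical
  have key : ∀ s : Finset (Fin a),
      Summable (fun n => |(ℙ {ω | (∑ i ∈ s, ξ i ω) = n}).toReal - pois (∑ i ∈ s, q i) n|) ∧
      ∑' n, |(ℙ {ω | (∑ i ∈ s, ξ i ω) = n}).toReal - pois (∑ i ∈ s, q i) n|
        ≤ ∑ i ∈ s, 2 * q i ^ 2 := by
    intro s
    induction s using Finset.induction_on with
    | empty =>
      have hz : ∀ n, (ℙ {ω | (∑ i ∈ (∅ : Finset (Fin a)), ξ i ω) = n}).toReal -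
          pois (∑ i ∈ (∅ : Finset (Fin a)), q i) n = 0 := by
        intro n
        simp only [Finset.sum_empty]
        match n with
        | 0 => simp [pois]
        | m+1 => simp [pois]
      simp only [hz, abs_zero]
      exact ⟨summable_zero, by simp⟩
    | @insert j s hj ih =>
      obtain ⟨ihs, ihb⟩ := ih
      have hXmeas : Measurable (fun ω => ∑ i ∈ s, ξ i ω) := by
        apply Finset.measurable_sum
        exact fun i _ => hmeas i
      have hindep : IndepFun (fun ω => ∑ i ∈ s, ξ i ω) (ξ j) ℙ := by
        have h := hind.indepFun_finsetSum_of_notMem hmeas hj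
        have hfun : (∑ i ∈ s, ξ i) = fun ω => ∑ i ∈ s, ξ i ω := by
          funext ω; simp
        rwa [hfun] at h
      have hconv : ∀ n, (ℙ {ω | (∑ i ∈ insert j s, ξ i ω) = n}).toReal =
          conv (fun k => (ℙ {ω | (∑ i ∈ s, ξ i ω) = k}).toReal) (bern (q j)) n := by
        intro n
        have h1 : {ω | (∑ i ∈ insert j s, ξ i ω) = n} =
            {ω | (∑ i ∈ s, ξ i ω) + ξ j ω = n} := by
          ext ω
          simp only [Set.mem_setOf_eq, Finset.sum_insert hj]
          omega
        rw [h1, law_add hXmeas (hmeas j) hindep n]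
        unfold conv
        simp only [law_bern (hmeas j) (hBern1 j) (hBern0 j)]
      have hpois : pois (∑ i ∈ insert j s, q i) =
          conv (pois (∑ i ∈ s, q i)) (pois (q j)) := by
        rw [conv_pois_pois, Finset.sum_insert hj, add_comm]
      have hqs : 0 ≤ ∑ i ∈ s, q i := Finset.sum_nonneg fun i _ => (hq i).1
      obtain ⟨hds, hdb⟩ := dist_conv_conv
        (f := fun k => (ℙ {ω | (∑ i ∈ s, ξ i ω) = k}).toReal)
        (g := pois (∑ i ∈ s, q i)) (h := bern (q j)) (k := pois (q j))
        ((hasSum_law hXmeas).summable.abs)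
        (pois_nonneg hqs) (hasSum_pois _)
        (bern_nonneg (hq j).1 (hq j).2) (hasSum_bern _)
        ((hasSum_pois (q j)).summable.abs)
      constructor
      · refine hds.congr fun n => ?_
        rw [hconv n, hpois]
      · calc ∑' n, |(ℙ {ω | (∑ i ∈ insert j s, ξ i ω) = n}).toReal -
              pois (∑ i ∈ insert j s, q i) n|
            = ∑' n, |conv (fun k => (ℙ {ω | (∑ i ∈ s, ξ i ω) = k}).toReal) (bern (q j)) n -
                conv (pois (∑ i ∈ s, q i)) (pois (q j)) n| := by
              apply tsum_congr; intro n; rw [hconv n, hpois]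
          _ ≤ (∑' n, |(ℙ {ω | (∑ i ∈ s, ξ i ω) = n}).toReal - pois (∑ i ∈ s, q i) n|) +
                ∑' n, |bern (q j) n - pois (q j) n| := hdb
          _ ≤ (∑ i ∈ s, 2 * q i ^ 2) + 2 * q j ^ 2 :=
              add_le_add ihb (bern_pois_dist (hq j).1 (hq j).2)
          _ = ∑ i ∈ insert j s, 2 * q i ^ 2 := by rw [Finset.sum_insert hj]; ring
  obtain ⟨hs, hb⟩ := key Finset.univ
  have hdrop : ∑' n : ℕ, |(ℙ {ω | (∑ i, ξ i ω) = n + 1}).toReal - pois (∑ i, q i) (n + 1)|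
      ≤ ∑' n : ℕ, |(ℙ {ω | (∑ i, ξ i ω) = n}).toReal - pois (∑ i, q i) n| := by
    rw [Summable.tsum_eq_zero_add hs]
    exact le_add_of_nonneg_left (abs_nonneg _)
  calc ∑' j : ℕ,
        |(ℙ {ω | (∑ i, ξ i ω) = j + 1}).toReal -
          (∑ i, q i) ^ (j + 1) * Real.exp (-(∑ i, q i)) / (j + 1).factorial|
      = ∑' n : ℕ, |(ℙ {ω | (∑ i, ξ i ω) = n + 1}).toReal - pois (∑ i, q i) (n + 1)| := by
        apply tsum_congr; intro n; rfl
    _ ≤ ∑' n : ℕ, |(ℙ {ω | (∑ i, ξ i ω) = n}).toReal - pois (∑ i, q i) n| := hdrop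
    _ ≤ ∑ i, 2 * q i ^ 2 := hb
    _ = 2 * ∑ i, q i ^ 2 := by rw [Finset.mul_sum]
end

section
/- Let (U_n) and (V_n) be sequences of real-valued, uniformly integrable random variables with U_n ≤ V_n almost surely for all n. If V_n converges in distribution to a random variable V and E[U_n] → E[V], then U_n converges in distribution to V. -/
open MeasureTheory ProbabilityTheory Filter
set_option linter.unusedSectionVars false

/-- Truncation of the identity to `[-K, K]`, as a bounded continuous function. -/
noncomputable def truncBCF (K : ℝ) : BoundedContinuousFunction ℝ ℝ :=
  BoundedContinuousFunction.mkOfBound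
    ⟨fun x => max (-K) (min x K), by fun_prop⟩ (2 * |K|) (by
      intro x y
      have h : ∀ z : ℝ, |max (-K) (min z K)| ≤ |K| := by
        intro z
        rw [abs_le]
        constructor
        · exact le_max_of_le_left (neg_le_neg (le_abs_self K))
        · exact max_le (neg_le_abs K) ((min_le_right _ _).trans (le_abs_self K))
      calc dist (max (-K) (min x K)) (max (-K) (min y K))
          ≤ |max (-K) (min x K)| + |max (-K) (min y K)| := abs_sub _ _
        _ ≤ 2 * |K| := by have := h x; have := h y; linarith)

lemma truncBCF_apply (K x : ℝ) : truncBCF K x = max (-K) (min x K) := rfl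

lemma abs_sub_truncBCF {K : ℝ} (hK : 0 ≤ K) (x : ℝ) :
    |x - truncBCF K x| ≤ if K < |x| then |x| else 0 := by
  rw [truncBCF_apply]
  rcases le_total 0 x with hx | hx
  · have h1 : max (-K) (min x K) = min x K :=
      max_eq_right ((neg_nonpos.mpr hK).trans (le_min hx hK))
    rw [h1]
    rcases le_total x K with h2 | h2
    · rw [min_eq_left h2]
      simp only [sub_self, abs_zero]
      split
      · exact abs_nonneg x
      · exact le_rfl
    · rw [min_eq_right h2]
      rw [abs_of_nonneg hx]
      rw [abs_of_nonneg (by linarith : (0:ℝ) ≤ x - K)]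
      split <;> linarith
  · have h1 : min x K = x := min_eq_left (hx.trans hK)
    rw [h1]
    rcases le_total (-K) x with h2 | h2
    · rw [max_eq_right h2]
      simp only [sub_self, abs_zero]
      split
      · exact abs_nonneg x
      · exact le_rfl
    · rw [max_eq_left h2]
      rw [abs_of_nonpos hx]
      rw [abs_of_nonpos (by linarith : x - -K ≤ 0)]
      split <;> linarith

section MeanConv

variable {Ω : Type*} [MeasureSpace Ω] [IsProbabilityMeasure (ℙ : Measure Ω)]

lemma tail_fun_eq (W : Ω → ℝ) (K : ℝ) :
    (fun ω => |W ω| * Set.indicator {ω' | K < |W ω'|} (1 : Ω → ℝ) ω)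
      = fun ω => if K < |W ω| then |W ω| else 0 := by
  funext ω
  simp [Set.indicator_apply, Set.mem_setOf_eq, mul_ite]

lemma tail_measurable {W : Ω → ℝ} (hW : Measurable W) (K : ℝ) :
    Measurable (fun ω => if K < |W ω| then |W ω| else 0) := by
  exact Measurable.ite (measurableSet_lt measurable_const hW.abs) hW.abs measurable_const

lemma tail_le_abs (W : Ω → ℝ) (K : ℝ) (ω : Ω) :
    (if K < |W ω| then |W ω| else 0) ≤ |W ω| := by
  split
  · exact le_rfl
  · exact abs_nonneg _

lemma tail_nonneg (W : Ω → ℝ) (K : ℝ) (ω : Ω) :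
    0 ≤ (if K < |W ω| then |W ω| else 0) := by
  split
  · exact abs_nonneg _
  · exact le_rfl

lemma tail_integrable {W : Ω → ℝ} (hWm : Measurable W) (hW : Integrable W) (K : ℝ) :
    Integrable (fun ω => if K < |W ω| then |W ω| else 0) := by
  refine hW.abs.mono (tail_measurable hWm K).aestronglyMeasurable ?_
  refine Filter.Eventually.of_forall fun ω => ?_
  rw [Real.norm_eq_abs, Real.norm_eq_abs, abs_abs,
    abs_of_nonneg (tail_nonneg W K ω)]
  exact tail_le_abs W K ω

lemma tail_integral_mono {W : Ω → ℝ} (hWm : Measurable W) (hW : Integrable W)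
    {K K' : ℝ} (h : K ≤ K') :
    (∫ ω, if K' < |W ω| then |W ω| else 0) ≤ ∫ ω, if K < |W ω| then |W ω| else 0 := by
  refine integral_mono (tail_integrable hWm hW K') (tail_integrable hWm hW K) fun ω => ?_
  by_cases h1 : K' < |W ω|
  · rw [if_pos h1, if_pos (lt_of_le_of_lt h h1)]
  · rw [if_neg h1]
    exact tail_nonneg W K ω

/-- Composition with the truncation is integrable. -/
lemma trunc_comp_integrable {W : Ω → ℝ} (hWm : Measurable W) (K : ℝ) :
    Integrable (fun ω => truncBCF K (W ω)) := by
  refine (integrable_const |K|).mono' ((truncBCF K).continuous.measurable.comp hWm).aestronglyMeasurable ?_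
  refine Filter.Eventually.of_forall fun ω => ?_
  rw [Real.norm_eq_abs, truncBCF_apply, abs_le]
  constructor
  · exact le_max_of_le_left (neg_le_neg (le_abs_self K))
  · exact max_le (neg_le_abs K) ((min_le_right _ _).trans (le_abs_self K))

/-- The key truncation error bound for integrals. -/
lemma integral_sub_trunc_le {W : Ω → ℝ} (hWm : Measurable W) (hW : Integrable W)
    {K : ℝ} (hK : 0 ≤ K) :
    |(∫ ω, W ω) - ∫ ω, truncBCF K (W ω)| ≤ ∫ ω, if K < |W ω| then |W ω| else 0 := by
  rw [← integral_sub hW (trunc_comp_integrable hWm K)]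
  calc |∫ ω, (W ω - truncBCF K (W ω))|
      ≤ ∫ ω, |W ω - truncBCF K (W ω)| := by
        simpa [Real.norm_eq_abs] using
          norm_integral_le_integral_norm (fun ω => W ω - truncBCF K (W ω))
    _ ≤ ∫ ω, if K < |W ω| then |W ω| else 0 := by
        refine integral_mono (hW.sub (trunc_comp_integrable hWm K)).abs
          (tail_integrable hWm hW K) fun ω => abs_sub_truncBCF hK (W ω)

/-- Tail integrals of a fixed integrable function tend to zero. -/
lemma tail_tendsto_zero {W : Ω → ℝ} (hWm : Measurable W) (hW : Integrable W) :
    Tendsto (fun k : ℕ => ∫ ω, if (k : ℝ) < |W ω| then |W ω| else 0) atTop (nhds 0) := by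
  have h := tendsto_integral_of_dominated_convergence (μ := (ℙ : Measure Ω))
      (F := fun k : ℕ => fun ω => if (k : ℝ) < |W ω| then |W ω| else 0)
      (f := fun _ => (0 : ℝ)) (bound := fun ω => |W ω|)
      (fun k => (tail_measurable hWm (k : ℝ)).aestronglyMeasurable)
      hW.abs
      (fun k => Filter.Eventually.of_forall fun ω => by
        rw [Real.norm_eq_abs, abs_of_nonneg (tail_nonneg W _ ω)]
        exact tail_le_abs W _ ω)
      (Filter.Eventually.of_forall fun ω => by
        refine tendsto_const_nhds.congr' ?_
        filter_upwards [eventually_ge_atTop ⌈|W ω|⌉₊] with k hk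
        have : |W ω| ≤ (k : ℝ) := (Nat.le_ceil _).trans (Nat.cast_le.mpr hk)
        rw [if_neg (not_lt.mpr this)])
  simpa using h

/-- Uniform integrability + convergence in distribution implies convergence of means. -/
lemma mean_tendsto_of_ui (W : ℕ → Ω → ℝ) (WL : Ω → ℝ)
    (hWm : ∀ n, Measurable (W n)) (hWLm : Measurable WL)
    (hWi : ∀ n, Integrable (W n)) (hWLi : Integrable WL)
    (hui : ∀ ε : ℝ, 0 < ε → ∃ K : ℝ, ∀ n,
      ∫ ω, |W n ω| * Set.indicator {ω' | K < |W n ω'|} 1 ω ≤ ε)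
    (hconv : ∀ f : BoundedContinuousFunction ℝ ℝ,
      Tendsto (fun n => ∫ ω, f (W n ω)) atTop (nhds (∫ ω, f (WL ω)))) :
    Tendsto (fun n => ∫ ω, W n ω) atTop (nhds (∫ ω, WL ω)) := by
  rw [Metric.tendsto_atTop]
  intro ε hε
  obtain ⟨K₁, hK₁⟩ := hui (ε / 4) (by linarith)
  have hK₁' : ∀ n, (∫ ω, if K₁ < |W n ω| then |W n ω| else 0) ≤ ε / 4 := by
    intro n
    have := hK₁ n
    rwa [tail_fun_eq (W n) K₁] at this
  obtain ⟨k₂, hk₂⟩ := (Metric.tendsto_atTop.mp (tail_tendsto_zero hWLm hWLi)) (ε / 4)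
    (by linarith)
  set K : ℝ := max 0 (max K₁ (k₂ : ℝ)) with hKdef
  have hK0 : 0 ≤ K := le_max_left _ _
  have hA : ∀ n, |(∫ ω, W n ω) - ∫ ω, truncBCF K (W n ω)| ≤ ε / 4 := by
    intro n
    refine (integral_sub_trunc_le (hWm n) (hWi n) hK0).trans ?_
    refine (tail_integral_mono (hWm n) (hWi n)
      ((le_max_left K₁ _).trans (le_max_right 0 _))).trans (hK₁' n)
  have hC : |(∫ ω, WL ω) - ∫ ω, truncBCF K (WL ω)| ≤ ε / 4 := by
    refine (integral_sub_trunc_le hWLm hWLi hK0).trans ?_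
    refine (tail_integral_mono hWLm hWLi
      ((le_max_right K₁ _).trans (le_max_right 0 _))).trans ?_
    have := hk₂ k₂ le_rfl
    rw [Real.dist_eq, sub_zero, abs_of_nonneg (integral_nonneg (tail_nonneg WL _))] at this
    exact this.le
  obtain ⟨N, hN⟩ := Metric.tendsto_atTop.mp (hconv (truncBCF K)) (ε / 4) (by linarith)
  refine ⟨N, fun n hn => ?_⟩
  have hB := hN n hn
  rw [Real.dist_eq] at hB ⊢
  have hAn := hA n
  calc |(∫ ω, W n ω) - ∫ ω, WL ω|
      ≤ |(∫ ω, W n ω) - ∫ ω, truncBCF K (W n ω)|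
        + |(∫ ω, truncBCF K (W n ω)) - ∫ ω, truncBCF K (WL ω)|
        + |(∫ ω, truncBCF K (WL ω)) - ∫ ω, WL ω| := by
          have := abs_sub_le ((∫ ω, W n ω)) (∫ ω, truncBCF K (W n ω)) (∫ ω, WL ω)
          have := abs_sub_le ((∫ ω, truncBCF K (W n ω))) (∫ ω, truncBCF K (WL ω)) (∫ ω, WL ω)
          linarith
    _ < ε := by
          have hC' : |(∫ ω, truncBCF K (WL ω)) - ∫ ω, WL ω| ≤ ε / 4 := by
            rw [abs_sub_comm]; exact hC
          linarith

end MeanConv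

theorem tendsto_of_le_of_mean_tendsto {Ω : Type*} [MeasureSpace Ω]
    [IsProbabilityMeasure (ℙ : Measure Ω)]
    (U V : ℕ → Ω → ℝ) (Vlim : Ω → ℝ)
    (hUmeas : ∀ n, Measurable (U n)) (hVmeas : ∀ n, Measurable (V n))
    (hVlimmeas : Measurable Vlim)
    (hUint : ∀ n, Integrable (U n)) (hVint : ∀ n, Integrable (V n))
    (hVlimint : Integrable Vlim)
    -- uniform integrability of (U n) : sup_n E[|U_n| 1_{|U_n| > K}] → 0 as K → ∞
    (hUui : ∀ ε : ℝ, 0 < ε → ∃ K : ℝ, ∀ n,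
      ∫ ω, |U n ω| * Set.indicator {ω' | K < |U n ω'|} 1 ω ≤ ε)
    (hVui : ∀ ε : ℝ, 0 < ε → ∃ K : ℝ, ∀ n,
      ∫ ω, |V n ω| * Set.indicator {ω' | K < |V n ω'|} 1 ω ≤ ε)
    (hle : ∀ n, ∀ᵐ ω ∂(ℙ : Measure Ω), U n ω ≤ V n ω)
    (hVconv : ∀ f : BoundedContinuousFunction ℝ ℝ,
      Tendsto (fun n => ∫ ω, f (V n ω)) atTop (nhds (∫ ω, f (Vlim ω))))
    (hmean : Tendsto (fun n => ∫ ω, U n ω) atTop (nhds (∫ ω, Vlim ω))) :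
    ∀ f : BoundedContinuousFunction ℝ ℝ,
      Tendsto (fun n => ∫ ω, f (U n ω)) atTop (nhds (∫ ω, f (Vlim ω))) := by
  -- Pushforward probability measures
  set P : ℕ → ProbabilityMeasure ℝ := fun n =>
    ⟨(ℙ : Measure Ω).map (U n), Measure.isProbabilityMeasure_map (hUmeas n).aemeasurable⟩ with hP
  set Q : ℕ → ProbabilityMeasure ℝ := fun n =>
    ⟨(ℙ : Measure Ω).map (V n), Measure.isProbabilityMeasure_map (hVmeas n).aemeasurable⟩ with hQ
  set QL : ProbabilityMeasure ℝ :=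
    ⟨(ℙ : Measure Ω).map Vlim, Measure.isProbabilityMeasure_map hVlimmeas.aemeasurable⟩ with hQL
  -- Weak convergence of the laws of V n
  have hQconv : Tendsto Q atTop (nhds QL) := by
    refine ProbabilityMeasure.tendsto_iff_forall_integral_tendsto.mpr fun f => ?_
    have h1 : ∀ n, ∫ x, f x ∂((Q n : Measure ℝ)) = ∫ ω, f (V n ω) := fun n =>
      integral_map (hVmeas n).aemeasurable f.continuous.aestronglyMeasurable
    have h2 : ∫ x, f x ∂((QL : Measure ℝ)) = ∫ ω, f (Vlim ω) :=
      integral_map hVlimmeas.aemeasurable f.continuous.aestronglyMeasurable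
    simpa [h1, h2] using hVconv f
  -- Mean convergence of V n
  have hVmean : Tendsto (fun n => ∫ ω, V n ω) atTop (nhds (∫ ω, Vlim ω)) :=
    mean_tendsto_of_ui V Vlim hVmeas hVlimmeas hVint hVlimint hVui hVconv
  -- L¹ convergence of V n - U n to 0
  have hD : Tendsto (fun n => (∫ ω, V n ω) - ∫ ω, U n ω) atTop (nhds 0) := by
    simpa using hVmean.sub hmean
  -- Lévy-Prokhorov distance between laws of U n and V n tends to zero
  have key : ∀ ε : ℝ, 0 < ε → ∀ᶠ n in atTop,
      levyProkhorovDist ((ℙ : Measure Ω).map (U n)) ((ℙ : Measure Ω).map (V n)) ≤ ε := by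
    intro ε hε
    have hsq : (0 : ℝ) < ε * ε := by positivity
    filter_upwards [hD.eventually (eventually_lt_nhds hsq)] with n hn
    haveI : IsProbabilityMeasure ((ℙ : Measure Ω).map (U n)) :=
      Measure.isProbabilityMeasure_map (hUmeas n).aemeasurable
    haveI : IsProbabilityMeasure ((ℙ : Measure Ω).map (V n)) :=
      Measure.isProbabilityMeasure_map (hVmeas n).aemeasurable
    refine levyProkhorovDist_le_of_forall_le _ _ hε.le fun ε' B hε' Bmble => ?_
    have hε'0 : 0 < ε' := hε.trans hε'
    rw [Measure.map_apply (hUmeas n) Bmble,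
      Measure.map_apply (hVmeas n) Metric.isOpen_thickening.measurableSet]
    set S : Set Ω := {ω | ε' ≤ V n ω - U n ω} with hS
    have hsub : (U n ⁻¹' B : Set Ω) ≤ᵐ[(ℙ : Measure Ω)]
        ((V n ⁻¹' Metric.thickening ε' B) ∪ S : Set Ω) := by
      filter_upwards [hle n] with ω hω
      intro hmem
      by_cases hcase : V n ω - U n ω < ε'
      · left
        exact Metric.mem_thickening_iff.mpr ⟨U n ω, hmem, by
          rw [Real.dist_eq, abs_of_nonneg (sub_nonneg.mpr hω)]; exact hcase⟩
      · right
        exact not_lt.mp hcase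
    have hDint : Integrable (fun ω => V n ω - U n ω) := (hVint n).sub (hUint n)
    have hDnn : 0 ≤ᵐ[(ℙ : Measure Ω)] fun ω => V n ω - U n ω := by
      filter_upwards [hle n] with ω hω
      exact sub_nonneg.mpr hω
    have hmark := mul_meas_ge_le_integral_of_nonneg hDnn hDint ε'
    have hint_eq : ∫ ω, (V n ω - U n ω) = (∫ ω, V n ω) - ∫ ω, U n ω :=
      integral_sub (hVint n) (hUint n)
    have hmark' : ε' * ((ℙ : Measure Ω) S).toReal < ε * ε' := by
      calc ε' * ((ℙ : Measure Ω) S).toReal ≤ ∫ ω, (V n ω - U n ω) := hmark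
        _ < ε * ε := by rw [hint_eq]; exact hn
        _ ≤ ε * ε' := by nlinarith
    have hStoReal : ((ℙ : Measure Ω) S).toReal ≤ ε' := by nlinarith
    have hSle : (ℙ : Measure Ω) S ≤ ENNReal.ofReal ε' := by
      rw [← ENNReal.ofReal_toReal (measure_ne_top (ℙ : Measure Ω) S)]
      exact ENNReal.ofReal_le_ofReal hStoReal
    calc (ℙ : Measure Ω) (U n ⁻¹' B)
        ≤ (ℙ : Measure Ω) ((V n ⁻¹' Metric.thickening ε' B) ∪ S) := measure_mono_ae hsub
      _ ≤ (ℙ : Measure Ω) (V n ⁻¹' Metric.thickening ε' B) + (ℙ : Measure Ω) S :=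
          measure_union_le _ _
      _ ≤ (ℙ : Measure Ω) (V n ⁻¹' Metric.thickening ε' B) + ENNReal.ofReal ε' := by
          exact add_le_add_right hSle _
  set φ : ProbabilityMeasure ℝ ≃ₜ LevyProkhorov (ProbabilityMeasure ℝ) :=
    LevyProkhorov.probabilityMeasureHomeomorph (Ω := ℝ)
  have hd1 : Tendsto (fun n => dist (φ (P n)) (φ (Q n))) atTop (nhds 0) := by
    rw [Metric.tendsto_nhds]
    intro ε hε
    filter_upwards [key (ε / 2) (by linarith)] with n hn
    have hdeq : dist (φ (P n)) (φ (Q n))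
        = levyProkhorovDist ((ℙ : Measure Ω).map (U n)) ((ℙ : Measure Ω).map (V n)) := rfl
    have hnn : (0 : ℝ) ≤ dist (φ (P n)) (φ (Q n)) := dist_nonneg
    rw [Real.dist_eq, sub_zero, abs_of_nonneg hnn, hdeq]
    linarith [hn]
  have hQLP : Tendsto (fun n => φ (Q n)) atTop (nhds (φ QL)) :=
    (φ.continuous.tendsto QL).comp hQconv
  have hd2 : Tendsto (fun n => dist (φ (Q n)) (φ QL)) atTop (nhds 0) :=
    tendsto_iff_dist_tendsto_zero.mp hQLP
  have hPLP : Tendsto (fun n => φ (P n)) atTop (nhds (φ QL)) := by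
    rw [tendsto_iff_dist_tendsto_zero]
    have hsum := hd1.add hd2
    rw [add_zero] at hsum
    refine squeeze_zero (fun n => dist_nonneg) (fun n => dist_triangle _ _ _) hsum
  have hPconv : Tendsto P atTop (nhds QL) := by
    have h := (φ.symm.continuous.tendsto (φ QL)).comp hPLP
    simpa [Function.comp_def] using h
  intro f
  have h := ProbabilityMeasure.tendsto_iff_forall_integral_tendsto.mp hPconv f
  have h1 : ∀ n, ∫ x, f x ∂((P n : Measure ℝ)) = ∫ ω, f (U n ω) := fun n =>
    integral_map (hUmeas n).aemeasurable f.continuous.aestronglyMeasurable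
  have h2 : ∫ x, f x ∂((QL : Measure ℝ)) = ∫ ω, f (Vlim ω) :=
    integral_map hVlimmeas.aemeasurable f.continuous.aestronglyMeasurable
  simpa [h1, h2] using h
end

section
/- Let p_n → 0 with p_n ln n → ∞, fix u > 0, and set y_n = ⌊u·p_n^{−1}·n^{p_n}⌋. Then the logarithm of I_n := √(2π)·n·(1/p_n)^{1/p_n+1/2}·y_n^{y_n+1/2}/(1/p_n + y_n)^{1/p_n+y_n+1/2} satisfies: if u > e^{−1} then ln I_n → −∞, and if u < e^{−1} then ln I_n → +∞; hence I_n → 0 in the first case and I_n → ∞ in the second. -/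
open Real Filter

theorem log_I_n_divergence (p : ℕ → ℝ) (hp : ∀ n, 0 < p n)
    (hp0 : Filter.Tendsto p Filter.atTop (nhds 0))
    (hplog : Filter.Tendsto (fun n : ℕ => p n * Real.log n) Filter.atTop Filter.atTop)
    (u : ℝ) (hu : 0 < u)
    (y : ℕ → ℕ) (hy : ∀ n, y n = ⌊u * (p n)⁻¹ * Real.exp (p n * Real.log n)⌋₊)
    (I : ℕ → ℝ)
    (hI : ∀ n, I n = Real.sqrt (2 * Real.pi) * n * (1 / p n) ^ (1 / p n + 1 / 2) *
        (y n : ℝ) ^ ((y n : ℝ) + 1 / 2) / (1 / p n + (y n : ℝ)) ^ (1 / p n + (y n : ℝ) + 1 / 2)) :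
    (Real.exp (-1) < u →
      Filter.Tendsto (fun n => Real.log (I n)) Filter.atTop Filter.atBot ∧
        Filter.Tendsto I Filter.atTop (nhds 0)) ∧
    (u < Real.exp (-1) →
      Filter.Tendsto (fun n => Real.log (I n)) Filter.atTop Filter.atTop ∧
        Filter.Tendsto I Filter.atTop Filter.atTop) := by
  -- notation
  set M : ℕ → ℝ := fun n => u * (p n)⁻¹ * Real.exp (p n * Real.log n) with hMdef
  set X : ℕ → ℝ := fun n => (p n)⁻¹ / (y n : ℝ) with hXdef
  have ha_top : Tendsto (fun n => (p n)⁻¹) atTop atTop := by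
    apply Filter.Tendsto.inv_tendsto_nhdsGT_zero
    exact tendsto_nhdsWithin_iff.2 ⟨hp0, Eventually.of_forall fun n => hp n⟩
  have hN_top : Tendsto (fun n => Real.exp (p n * Real.log n)) atTop atTop :=
    Real.tendsto_exp_atTop.comp hplog
  have hM_top : Tendsto M atTop atTop := by
    have h1 : Tendsto (fun n => (p n)⁻¹ * Real.exp (p n * Real.log n)) atTop atTop :=
      ha_top.atTop_mul_atTop₀ hN_top
    have := (tendsto_const_nhds (x := u)).pos_mul_atTop hu h1
    refine this.congr fun n => by simp [hMdef, mul_assoc]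
  have hM2 : ∀ᶠ n in atTop, 2 ≤ M n := hM_top.eventually_ge_atTop 2
  have hy1 : ∀ᶠ n in atTop, 1 ≤ y n := by
    filter_upwards [hM2] with n hn
    rw [hy n]
    exact Nat.le_floor (by exact_mod_cast (by linarith : (1:ℝ) ≤ M n))
  have hM0 : ∀ᶠ n in atTop, 0 < M n := hM2.mono fun n h => by linarith
  -- bounds on y
  have hyle : ∀ n, 0 < M n → (y n : ℝ) ≤ M n := fun n h => by
    rw [hy n]; exact Nat.floor_le h.le
  have hygt : ∀ n, M n - 1 < (y n : ℝ) := fun n => by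
    rw [hy n]; exact Nat.sub_one_lt_floor _
  -- X → 0, X > 0
  have hXpos : ∀ᶠ n in atTop, 0 < X n := by
    filter_upwards [hy1] with n hn
    have : (0:ℝ) < y n := by exact_mod_cast hn
    exact div_pos (inv_pos.2 (hp n)) this
  have hX0 : Tendsto X atTop (nhds 0) := by
    have hupper : Tendsto (fun n => 2 / (u * Real.exp (p n * Real.log n))) atTop (nhds 0) := by
      have h1 : Tendsto (fun n => u * Real.exp (p n * Real.log n)) atTop atTop :=
        (tendsto_const_nhds (x := u)).pos_mul_atTop hu hN_top
      have h2 := h1.inv_tendsto_atTop.const_mul 2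
      rw [mul_zero] at h2
      exact h2.congr fun n => (div_eq_mul_inv _ _).symm
    refine tendsto_of_tendsto_of_tendsto_of_le_of_le' tendsto_const_nhds hupper
      (hXpos.mono fun n h => h.le) ?_
    filter_upwards [hM2] with n hn
    have hP := hp n
    have hNpos := Real.exp_pos (p n * Real.log n)
    have hyM : M n / 2 ≤ (y n : ℝ) := by
      have := hygt n; linarith
    have hy0 : (0:ℝ) < y n := lt_of_lt_of_le (by linarith) hyM
    have h2 : X n ≤ (p n)⁻¹ / (M n / 2) :=
      div_le_div_of_nonneg_left (inv_pos.2 hP).le (by linarith) hyM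
    refine h2.trans_eq ?_
    rw [hMdef]
    field_simp
  have hlog1X : Tendsto (fun n => Real.log (1 + X n)) atTop (nhds 0) := by
    have := (Real.continuousAt_log (by norm_num : (1:ℝ) + 0 ≠ 0)).tendsto.comp
      (tendsto_const_nhds.add hX0)
    simpa [Function.comp_def] using this
  -- log(1+X)/X → 1
  have hD : Tendsto (fun n => Real.log (1 + X n) / X n) atTop (nhds 1) := by
    have hlower : Tendsto (fun n => (1 + X n)⁻¹) atTop (nhds 1) := by
      have := ((tendsto_const_nhds (x := (1:ℝ))).add hX0).inv₀ (by norm_num)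
      simpa using this
    refine tendsto_of_tendsto_of_tendsto_of_le_of_le' hlower tendsto_const_nhds ?_ ?_
    · filter_upwards [hXpos] with n hx
      have h1x : (0:ℝ) < 1 + X n := by linarith
      have hlog : X n / (1 + X n) ≤ Real.log (1 + X n) := by
        have := Real.log_le_sub_one_of_pos (inv_pos.2 h1x)
        rw [Real.log_inv] at this
        have h2 : 1 - (1 + X n)⁻¹ ≤ Real.log (1 + X n) := by linarith
        refine le_trans (le_of_eq ?_) h2
        field_simp
        ring
      calc (1 + X n)⁻¹ = X n / (1 + X n) / X n := by field_simp
        _ ≤ Real.log (1 + X n) / X n := by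
            gcongr
    · filter_upwards [hXpos] with n hx
      have h1x : (0:ℝ) < 1 + X n := by linarith
      have hlog : Real.log (1 + X n) ≤ X n := by
        have := Real.log_le_sub_one_of_pos h1x; linarith
      exact (div_le_one hx).2 hlog
  -- delta → 0
  have hδ : Tendsto (fun n => Real.log (y n) -
      (Real.log u + Real.log ((p n)⁻¹) + p n * Real.log n)) atTop (nhds 0) := by
    have hr : Tendsto (fun n => (y n : ℝ) / M n) atTop (nhds 1) := by
      have hlow : Tendsto (fun n => 1 - (M n)⁻¹) atTop (nhds 1) := by
        have := (tendsto_const_nhds (x := (1:ℝ))).sub hM_top.inv_tendsto_atTop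
        simpa using this
      refine tendsto_of_tendsto_of_tendsto_of_le_of_le' hlow tendsto_const_nhds ?_ ?_
      · filter_upwards [hM0] with n hn
        rw [le_div_iff₀ hn]
        have h1 : (1 - (M n)⁻¹) * M n = M n - 1 := by field_simp
        rw [h1]
        exact (hygt n).le
      · filter_upwards [hM0] with n hn
        exact (div_le_one hn).2 (hyle n hn)
    have hcomp := (Real.continuousAt_log (by norm_num : (1:ℝ) ≠ 0)).tendsto.comp hr
    rw [Real.log_one] at hcomp
    refine hcomp.congr' ?_
    filter_upwards [hM0, hy1] with n hn hyn
    have hy0 : (0:ℝ) < y n := by exact_mod_cast hyn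
    have hP := hp n
    have hNpos := Real.exp_pos (p n * Real.log n)
    show Real.log ((y n : ℝ) / M n) = _
    rw [Real.log_div hy0.ne' hn.ne', hMdef]
    simp only []
    rw [Real.log_mul (by positivity) hNpos.ne', Real.log_mul hu.ne' (by positivity),
      Real.log_exp]
  -- B term
  have hB : Tendsto (fun n => p n / 2 * Real.log ((p n)⁻¹)) atTop (nhds 0) := by
    have h1 := (Real.isLittleO_log_id_atTop.tendsto_div_nhds_zero).comp ha_top
    have h2 := h1.div_const 2
    simp only [zero_div] at h2
    refine h2.congr fun n => ?_
    simp only [Function.comp_apply, id_eq]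
    rw [div_eq_mul_inv (Real.log (p n)⁻¹), inv_inv]
    ring
  -- main eventual identity
  have key : ∀ᶠ n in atTop,
      p n * Real.log (Real.sqrt (2 * Real.pi)) + p n / 2 * Real.log ((p n)⁻¹)
        - Real.log u
        - (Real.log (y n) - (Real.log u + Real.log ((p n)⁻¹) + p n * Real.log n))
        - (1 + p n / 2) * Real.log (1 + X n)
        - Real.log (1 + X n) / X n
      = p n * Real.log (I n) := by
    filter_upwards [hy1, eventually_ge_atTop 1] with n hyn hn1
    have hP := hp n
    have hy0 : (0:ℝ) < y n := by exact_mod_cast hyn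
    have hA : (0:ℝ) < (p n)⁻¹ := inv_pos.2 hP
    have hn0 : (0:ℝ) < n := by exact_mod_cast hn1
    have hs : (0:ℝ) < Real.sqrt (2 * Real.pi) := Real.sqrt_pos.2 (by positivity)
    have hAY : (0:ℝ) < 1 / p n + (y n : ℝ) := by rw [one_div]; positivity
    rw [hI n]
    rw [Real.log_div (by positivity) (by positivity),
      Real.log_mul (by positivity) (by positivity),
      Real.log_mul (by positivity) (by positivity),
      Real.log_mul (by positivity) (by positivity),
      Real.log_rpow (by positivity), Real.log_rpow hy0, Real.log_rpow hAY]
    have hsplit : Real.log (1 / p n + (y n : ℝ)) =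
        Real.log (y n) + Real.log (1 + X n) := by
      rw [← Real.log_mul hy0.ne' (by positivity)]
      congr 1
      rw [hXdef]
      field_simp
      ring
    rw [hsplit, one_div]
    have hXval : X n = (p n)⁻¹ / (y n : ℝ) := rfl
    rw [hXval]
    field_simp
    ring
  -- combine limits
  have hA0 : Tendsto (fun n => p n * Real.log (Real.sqrt (2 * Real.pi))) atTop (nhds 0) := by
    simpa using hp0.mul_const (Real.log (Real.sqrt (2 * Real.pi)))
  have hC0 : Tendsto (fun n => (1 + p n / 2) * Real.log (1 + X n)) atTop (nhds 0) := by
    have h1 : Tendsto (fun n => 1 + p n / 2) atTop (nhds 1) := by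
      have := (tendsto_const_nhds (x := (1:ℝ))).add (hp0.div_const 2)
      simpa using this
    simpa using h1.mul hlog1X
  have hlim : Tendsto (fun n => p n * Real.log (I n)) atTop (nhds (-1 - Real.log u)) := by
    have h := ((((hA0.add hB).sub_const (Real.log u)).sub hδ).sub hC0).sub hD
    have h2 : (0:ℝ) + 0 - Real.log u - 0 - 0 - 1 = -1 - Real.log u := by ring
    rw [h2] at h
    exact h.congr' key
  have hIpos : ∀ᶠ n in atTop, 0 < I n := by
    filter_upwards [hy1, eventually_ge_atTop 1] with n hyn hn1
    have hP := hp n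
    have hy0 : (0:ℝ) < y n := by exact_mod_cast hyn
    have hn0 : (0:ℝ) < n := by exact_mod_cast hn1
    have hA : (0:ℝ) < 1 / p n := by positivity
    have hAY : (0:ℝ) < 1 / p n + (y n : ℝ) := by positivity
    rw [hI n]
    have hs : (0:ℝ) < Real.sqrt (2 * Real.pi) := Real.sqrt_pos.2 (by positivity)
    positivity
  constructor
  · intro hu'
    have hc : -1 - Real.log u < 0 := by
      have : -1 < Real.log u := (Real.lt_log_iff_exp_lt hu).2 hu'
      linarith
    have hbot : Tendsto (fun n => Real.log (I n)) atTop atBot := by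
      have h2 := Filter.Tendsto.neg_mul_atTop hc hlim ha_top
      refine h2.congr fun n => ?_
      rw [mul_comm (p n), mul_assoc, mul_inv_cancel₀ (hp n).ne', mul_one]
    refine ⟨hbot, ?_⟩
    have := Real.tendsto_exp_atBot.comp hbot
    refine this.congr' ?_
    filter_upwards [hIpos] with n hn
    exact Real.exp_log hn
  · intro hu'
    have hc : 0 < -1 - Real.log u := by
      have : Real.log u < -1 := by
        have := Real.log_lt_log hu hu'
        rwa [Real.log_exp] at this
      linarith
    have htop : Tendsto (fun n => Real.log (I n)) atTop atTop := by
      have h2 := Filter.Tendsto.pos_mul_atTop hc hlim ha_top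
      refine h2.congr fun n => ?_
      rw [mul_comm (p n), mul_assoc, mul_inv_cancel₀ (hp n).ne', mul_one]
    refine ⟨htop, ?_⟩
    have := Real.tendsto_exp_atTop.comp htop
    refine this.congr' ?_
    filter_upwards [hIpos] with n hn
    exact Real.exp_log hn
end
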